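/- Let μ be a collapsible path in a row-finite directed graph F. Then every infinite path λ ∈ F^∞ whose range is a vertex of F_μ⁰ = F⁰ ∖ {s(μᵢ) : i ≥ 1} either factors as λ = l¹…lᵏμ with each lⁱ ∈ (F¹ ∩ E¹) ∪ F*(μ), or factors as an infinite concatenation λ = l¹l²… with each lⁱ ∈ (F¹ ∩ E¹) ∪ F*(μ), where F*(μ) := {ν ∈ F* : |ν| > 1, ν = μ₁…μ_{|ν|−1}e for some edge e ≠ μ_{|ν|}}. -/

import Mathlib

structure DirectedGraph where
  V : Type
  E : Type
  r : E → V
  s : E → V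

namespace DirectedGraph

variable {G : DirectedGraph}

/-- A finite path: a list of edges `μ₁ … μₙ` with `s μᵢ = r μᵢ₊₁`, together with its
range vertex (which is the range of the first edge when the path is nonempty, and is
the defining datum of the path when the path has length zero, i.e. is a vertex). -/
structure FinPath (G : DirectedGraph) where
  vtx : G.V
  edges : List G.E
  chain : edges.Chain' fun e f => G.s e = G.r f
  hv : ∀ e ∈ edges.head?, G.r e = vtx

/-- An infinite path `μ₁μ₂…` with `s μᵢ = r μᵢ₊₁`. -/
structure InfPath (G : DirectedGraph) where
  edge : ℕ → G.E
  chain : ∀ n, G.s (edge n) = G.r (edge (n + 1))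

/-- The path space `E* ∪ E^∞`. -/
abbrev PathSpace (G : DirectedGraph) := FinPath G ⊕ InfPath G

namespace FinPath

def length (μ : FinPath G) : ℕ := μ.edges.length

def range (μ : FinPath G) : G.V := μ.vtx

def source (μ : FinPath G) : G.V := (μ.edges.getLast?).elim μ.vtx G.s

/-- A vertex, regarded as a path of length zero. -/
def ofVertex (G : DirectedGraph) (v : G.V) : FinPath G :=
  ⟨v, [], List.isChain_nil, by simp⟩

/-- `μ.Extends ν` means `μ = νν′` for some path `ν′`. -/
def Extends (μ ν : FinPath G) : Prop := μ.vtx = ν.vtx ∧ ν.edges <+: μ.edges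

end FinPath

def InfPath.range (x : InfPath G) : G.V := G.r (x.edge 0)

/-- `x.Extends ν` means the infinite path `x` is of the form `νx′`. -/
def InfPath.Extends (x : InfPath G) (ν : FinPath G) : Prop :=
  (ν.edges = [] → x.range = ν.vtx) ∧
  ∀ i, (h : i < ν.edges.length) → x.edge i = ν.edges.get ⟨i, h⟩

/-- The cylinder set `Z(μ) = {w ∈ E* ∪ E^∞ : w = μw′}`. -/
def Cyl (μ : FinPath G) : Set (PathSpace G) :=
  {w | match w with
       | Sum.inl lam => lam.Extends μ
       | Sum.inr x => x.Extends μ}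

/-- The cylinder set `Z(μe)` of the path `μ` followed by the edge `e`. -/
def CylSnoc (μ : FinPath G) (e : G.E) : Set (PathSpace G) :=
  {w | match w with
       | Sum.inl lam => (μ.edges ++ [e]) <+: lam.edges
       | Sum.inr x => ∀ i, (h : i < (μ.edges ++ [e]).length) →
           x.edge i = (μ.edges ++ [e]).get ⟨i, h⟩}

/-- `Z(μ∖G) := Z(μ) ∖ ⋃_{e ∈ G} Z(μe)`. -/
def CylMinus (μ : FinPath G) (GS : Finset G.E) : Set (PathSpace G) :=
  Cyl μ \ ⋃ e ∈ GS, CylSnoc μ e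

/-- The basic sets `Z(μ∖G)` for `μ ∈ E*` and `G ⊆ s(μ)E¹` finite. -/
def basicSets (G : DirectedGraph) : Set (Set (PathSpace G)) :=
  {S | ∃ (μ : FinPath G) (GS : Finset G.E),
        (∀ e ∈ GS, G.r e = μ.source) ∧ S = CylMinus μ GS}

end DirectedGraph
namespace DirectedGraph

variable {G : DirectedGraph}

/-- (C1) an infinite path has no exits: any edge sharing a source with an edge of the
path is that edge. -/
def HasNoExits (mu : InfPath G) : Prop :=
  ∀ (e : G.E) (i : ℕ), G.s e = G.s (mu.edge i) → e = mu.edge i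

/-- The entries of an infinite path: edges into a vertex of the path other than the
edges of the path itself. -/
def entries (mu : InfPath G) : Set G.E :=
  {e | ∃ i, G.r e = G.r (mu.edge i) ∧ e ≠ mu.edge i}

/-- A collapsible infinite path: (C1) no exits, (C2) each vertex on it receives finitely
many edges, (C3) its range receives only its first edge, (C4) its edges are distinct,
(C5) it has zero or infinitely many entries. -/
def Collapsible (mu : InfPath G) : Prop :=
  HasNoExits mu ∧
  (∀ i, (G.r ⁻¹' {G.r (mu.edge i)}).Finite) ∧
  (G.r ⁻¹' {mu.range} = {mu.edge 0}) ∧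
  Function.Injective mu.edge ∧
  (entries mu = ∅ ∨ (entries mu).Infinite)

/-- F*(mu): finite paths nu with |nu| > 1 of the form mu₁…mu_{|nu|-1}e with
e ≠ mu_{|nu|}. -/
def CollCand (mu : InfPath G) : Set (FinPath G) :=
  {nu | 1 < nu.edges.length ∧
        (∀ i, i + 1 < nu.edges.length → nu.edges[i]? = some (mu.edge i)) ∧
        nu.edges[nu.edges.length - 1]? ≠ some (mu.edge (nu.edges.length - 1))}

/-- s_∞(M): the sources of the edges of the paths in M. -/
def sInfSet (M : Set (InfPath G)) : Set G.V :=
  {v | ∃ mu ∈ M, ∃ i, v = G.s (mu.edge i)}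

/-- The edges of the graph kept (unchanged) when collapsing the paths in M:
F¹ ∖ (r⁻¹(s_∞(M)) ∪ {first edges of paths in M}). -/
def Kept (M : Set (InfPath G)) : Set G.E :=
  {e | G.r e ∉ sInfSet M ∧ ∀ mu ∈ M, e ≠ mu.edge 0}

/-- The paths in M are pairwise disjoint: distinct paths share no edges and no
vertices. -/
def DisjointPaths (M : Set (InfPath G)) : Prop :=
  ∀ mu ∈ M, ∀ nu ∈ M, mu ≠ nu →
    (∀ i j, mu.edge i ≠ nu.edge j) ∧ (∀ i j, G.r (mu.edge i) ≠ G.r (nu.edge j))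

/-- The graph obtained by collapsing the paths in M: vertices are those not of the form
s(muᵢ); edges are the kept edges together with an edge e_nu for each nu ∈ F*(mu),
mu ∈ M.  (The subtype conditions on sources and ranges hold automatically when the
paths of M are disjoint and collapsible.) -/
def Collapsed (G : DirectedGraph) (M : Set (InfPath G)) : DirectedGraph where
  V := {v : G.V // v ∉ sInfSet M}
  E := {e : G.E // e ∈ Kept M ∧ G.s e ∉ sInfSet M} ⊕
       {p : InfPath G × FinPath G // p.1 ∈ M ∧ p.2 ∈ CollCand p.1 ∧
          p.2.vtx ∉ sInfSet M ∧ p.2.source ∉ sInfSet M}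
  r := fun x => match x with
    | Sum.inl e => ⟨G.r e.1, e.2.1.1⟩
    | Sum.inr p => ⟨p.1.2.vtx, p.2.2.2.1⟩
  s := fun x => match x with
    | Sum.inl e => ⟨G.s e.1, e.2.2⟩
    | Sum.inr p => ⟨p.1.2.source, p.2.2.2.2⟩

/-- The vertex of the collapsed graph, as a vertex of the original graph. -/
def collV (M : Set (InfPath G)) (v : (Collapsed G M).V) : G.V := v.1

/-- The list of edges of the original graph underlying an edge of the collapsed
graph. -/
def segEdges (M : Set (InfPath G)) : (Collapsed G M).E → List G.E
  | Sum.inl e => [e.1]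
  | Sum.inr p => p.1.2.edges

/-- A finite list of edges is an initial segment of an infinite path. -/
def IsPrefixOfInf (l : List G.E) (x : InfPath G) : Prop :=
  ∀ i, (h : i < l.length) → x.edge i = l.get ⟨i, h⟩

end DirectedGraph


namespace DirectedGraph

/-- The segments from which paths in the desingularised graph are built: single kept
edges (edges of F¹ ∩ E¹) and paths in F*(mu). -/
def SegSet (G : DirectedGraph) (mu : InfPath G) : Set (FinPath G) :=
  {nu | (∃ e ∈ Kept ({mu} : Set (InfPath G)), nu.edges = [e]) ∨ nu ∈ CollCand mu}

end DirectedGraph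


namespace DirectedGraph

variable {F : DirectedGraph}

lemma mem_sInf {mu : InfPath F} {v : F.V} :
    v ∈ sInfSet ({mu} : Set (InfPath F)) ↔ ∃ i, v = F.s (mu.edge i) := by
  simp [sInfSet]

/-- The segment of `lam` starting at `k` of length `m+1`. -/
def lamSeg (lam : InfPath F) (k m : ℕ) : FinPath F where
  vtx := F.r (lam.edge k)
  edges := List.ofFn fun i : Fin (m + 1) => lam.edge (k + i)
  chain := by
    refine List.isChain_ofFn.mpr ?_
    intro i hi
    simpa [Nat.add_assoc] using lam.chain (k + i)
  hv := by
    intro e he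
    rw [List.ofFn_succ] at he
    simp only [List.head?_cons, Option.mem_some_iff] at he
    simp [← he]

lemma lamSeg_edges (lam : InfPath F) (k m : ℕ) :
    (lamSeg lam k m).edges = List.ofFn fun i : Fin (m + 1) => lam.edge (k + i) := rfl

lemma lamSeg_length (lam : InfPath F) (k m : ℕ) :
    (lamSeg lam k m).edges.length = m + 1 := by
  simp [lamSeg_edges]

lemma lamSeg_getElem? (lam : InfPath F) (k m i : ℕ) (h : i < m + 1) :
    (lamSeg lam k m).edges[i]? = some (lam.edge (k + i)) := by
  rw [lamSeg_edges, List.getElem?_ofFn]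
  simp [List.ofFnNthVal, h]

lemma lamSeg_getElem (lam : InfPath F) (k m i : ℕ) (h : i < (lamSeg lam k m).edges.length) :
    (lamSeg lam k m).edges[i] = lam.edge (k + i) := by
  have h' : i < m + 1 := by rw [lamSeg_length] at h; omega
  have := lamSeg_getElem? lam k m i h'
  rw [List.getElem?_eq_getElem h] at this
  exact Option.some_inj.mp this

lemma ofFn_coe_succ {α : Type*} (g : ℕ → α) (n : ℕ) :
    (List.ofFn fun i : Fin (n + 1) => g i) = (List.ofFn fun i : Fin n => g i) ++ [g n] := by
  rw [List.ofFn_succ']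
  simp [List.concat_eq_append]

section

variable {mu lam : InfPath F}

/-- `k` is a position of `lam` whose range is a vertex of the collapsed graph. -/
def GoodPos (mu lam : InfPath F) (k : ℕ) : Prop :=
  F.r (lam.edge k) ∉ sInfSet ({mu} : Set (InfPath F))

/-- From position `k` on, `lam` agrees with `mu`. -/
def TailEq (mu lam : InfPath F) (k : ℕ) : Prop := ∀ i, lam.edge (k + i) = mu.edge i

lemma ne_mu_edge (hcol : Collapsible mu) {f : F.E} {j : ℕ} (hj : 0 < j)
    (hrf : F.r f = F.r (mu.edge j)) (hfj : f ≠ mu.edge j) : ∀ m, f ≠ mu.edge m := by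
  obtain ⟨hne, -, hr3, hinj, -⟩ := hcol
  intro m h
  subst h
  cases m with
  | zero =>
    have : mu.edge j ∈ F.r ⁻¹' {mu.range} := by
      simp only [Set.mem_preimage, Set.mem_singleton_iff, InfPath.range, ← hrf]
    rw [hr3] at this
    exact absurd (hinj this) hj.ne'
  | succ m' =>
    cases j with
    | zero => omega
    | succ j' =>
      have h1 : F.s (mu.edge m') = F.s (mu.edge j') := by
        rw [mu.chain m', mu.chain j']
        exact hrf
      have := hinj (hne (mu.edge m') j' h1)
      subst this
      exact hfj rfl

lemma ne_mu_edge' (hcol : Collapsible mu) {f : F.E}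
    (hrngf : F.r f ∉ sInfSet ({mu} : Set (InfPath F))) (hf0 : f ≠ mu.edge 0) :
    ∀ m, f ≠ mu.edge m := by
  intro m h
  subst h
  cases m with
  | zero => exact hf0 rfl
  | succ m' =>
    exact hrngf (mem_sInf.mpr ⟨m', (mu.chain m').symm⟩)

lemma s_not_mem (hcol : Collapsible mu) {f : F.E} (h : ∀ m, f ≠ mu.edge m) :
    F.s f ∉ sInfSet ({mu} : Set (InfPath F)) := by
  intro hmem
  obtain ⟨i, hi⟩ := mem_sInf.mp hmem
  exact h i (hcol.1 f i hi)

lemma step (hcol : Collapsible mu) {k : ℕ} (hk : GoodPos mu lam k)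
    (hnt : ¬ TailEq mu lam k) :
    ∃ m : ℕ, lamSeg lam k m ∈ SegSet F mu ∧ GoodPos mu lam (k + (m + 1)) ∧
      ∀ n, k < n → TailEq mu lam n → k + (m + 1) ≤ n := by
  by_cases h0 : lam.edge k = mu.edge 0
  · -- lam follows mu from k until the first deviation
    have hex : ∃ i, lam.edge (k + i) ≠ mu.edge i := by
      by_contra h; push_neg at h; exact hnt h
    classical
    set j := Nat.find hex with hjdef
    have hfj : lam.edge (k + j) ≠ mu.edge j := Nat.find_spec hex
    have hlt : ∀ i < j, lam.edge (k + i) = mu.edge i := by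
      intro i hi
      have := Nat.find_min hex hi
      push_neg at this
      exact this
    have hj : 0 < j := by
      rcases Nat.eq_zero_or_pos j with h | h
      · exact absurd (by simpa [h] using h0) (h ▸ hfj)
      · exact h
    have hrng : ∀ i ≤ j, F.r (lam.edge (k + i)) = F.r (mu.edge i) := by
      intro i hi
      cases i with
      | zero => simp [h0]
      | succ i' =>
        have h1 : lam.edge (k + i') = mu.edge i' := hlt i' (by omega)
        have := lam.chain (k + i')
        rw [show k + i' + 1 = k + (i' + 1) by omega] at this
        rw [← this, h1, mu.chain i']
    have hrf : F.r (lam.edge (k + j)) = F.r (mu.edge j) := hrng j le_rfl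
    have hall : ∀ m, lam.edge (k + j) ≠ mu.edge m := ne_mu_edge hcol hj hrf hfj
    refine ⟨j, Or.inr ?_, ?_, ?_⟩
    · refine ⟨by rw [lamSeg_length]; omega, ?_, ?_⟩
      · intro i hi
        rw [lamSeg_length] at hi
        rw [lamSeg_getElem? lam k j i (by omega), hlt i (by omega)]
      · rw [lamSeg_length]
        simp only [Nat.add_sub_cancel]
        rw [lamSeg_getElem? lam k j j (by omega)]
        simpa using hfj
    · have : F.r (lam.edge (k + (j + 1))) = F.s (lam.edge (k + j)) := by
        rw [show k + (j + 1) = k + j + 1 from by omega, ← lam.chain (k + j)]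
      rw [GoodPos, this]
      exact s_not_mem hcol hall
    · intro n hkn htl
      by_contra hcon
      push_neg at hcon
      obtain ⟨t, rfl⟩ := Nat.exists_eq_add_of_lt hkn
      have ht : t + 1 ≤ j := by omega
      have h00 : lam.edge (k + t + 1) = mu.edge 0 := by simpa using htl 0
      rcases Nat.lt_or_ge (t + 1) j with h | h
      · have := hlt (t + 1) h
        rw [show k + (t + 1) = k + t + 1 by omega] at this
        rw [this] at h00
        exact absurd (hcol.2.2.2.1 h00) (by omega)
      · have hj' : t + 1 = j := by omega
        rw [show k + t + 1 = k + j by omega] at h00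
        exact hall 0 h00
  · -- single kept edge
    have hall : ∀ m, lam.edge k ≠ mu.edge m := ne_mu_edge' hcol hk h0
    refine ⟨0, Or.inl ⟨lam.edge k, ⟨hk, ?_⟩, ?_⟩, ?_, ?_⟩
    · intro nu hnu
      rw [Set.mem_singleton_iff] at hnu
      subst hnu
      exact hall 0
    · rw [lamSeg_edges]
      simp [List.ofFn_succ]
    · have : F.r (lam.edge (k + (0 + 1))) = F.s (lam.edge k) := by
        rw [show k + (0 + 1) = k + 1 from by omega, ← lam.chain k]
      rw [GoodPos, this]
      exact s_not_mem hcol hall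
    · intro n hkn _
      omega

end

end DirectedGraph

open DirectedGraph in
/-- every infinite path lam of F whose range is a vertex of the collapsed
graph either factors as lam = l¹…lᵏmu with each lⁱ ∈ (F¹ ∩ E¹) ∪ F*(mu), or as an
infinite concatenation lam = l¹l²… of such segments. -/
theorem infPath_factorisation (F : DirectedGraph) (mu : InfPath F)
    (hcol : Collapsible mu) (hrf : ∀ v : F.V, (F.r ⁻¹' {v}).Finite)
    (lam : InfPath F) (hlam : lam.range ∉ sInfSet ({mu} : Set (InfPath F))) :
    (∃ segs : List (FinPath F), (∀ nu ∈ segs, nu ∈ SegSet F mu) ∧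
        IsPrefixOfInf (segs.flatMap FinPath.edges) lam ∧
        ∀ i, lam.edge ((segs.flatMap FinPath.edges).length + i) = mu.edge i) ∨
    (∃ seg : ℕ → FinPath F, (∀ n, seg n ∈ SegSet F mu) ∧
        ∀ n, IsPrefixOfInf
          ((List.ofFn fun i : Fin n => seg i).flatMap FinPath.edges) lam) := by
  classical
  have good0 : GoodPos mu lam 0 := hlam
  by_cases htail : ∃ n, TailEq mu lam n
  · -- lam eventually coincides with mu
    have hTN : TailEq mu lam (Nat.find htail) := Nat.find_spec htail
    set N := Nat.find htail with hN
    have hmin : ∀ k < N, ¬ TailEq mu lam k := fun k hk => Nat.find_min htail hk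
    have key : ∀ m k, N = k + m → GoodPos mu lam k →
        ∃ segs : List (FinPath F), (∀ nu ∈ segs, nu ∈ SegSet F mu) ∧
          (segs.flatMap FinPath.edges).length = m ∧
          ∀ i < m, (segs.flatMap FinPath.edges)[i]? = some (lam.edge (k + i)) := by
      intro m
      induction m using Nat.strong_induction_on with
      | _ m ih =>
        intro k hkm hk
        rcases Nat.eq_zero_or_pos m with rfl | hm
        · exact ⟨[], by simp, by simp, by omega⟩
        · have hkN : k < N := by omega
          obtain ⟨m₀, hseg, hgood, hbound⟩ := step hcol hk (hmin k hkN)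
          have hle : k + (m₀ + 1) ≤ N := hbound N hkN hTN
          obtain ⟨segs', h1, h2, h3⟩ :=
            ih (m - (m₀ + 1)) (by omega) (k + (m₀ + 1)) (by omega) hgood
          refine ⟨lamSeg lam k m₀ :: segs', ?_, ?_, ?_⟩
          · intro nu hnu
            rcases List.mem_cons.mp hnu with rfl | h
            · exact hseg
            · exact h1 nu h
          · simp only [List.flatMap_cons, List.length_append, lamSeg_length, h2]
            omega
          · intro i hi
            rw [List.flatMap_cons]
            rcases Nat.lt_or_ge i (m₀ + 1) with h | h
            · rw [List.getElem?_append_left (by rw [lamSeg_length]; omega)]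
              exact lamSeg_getElem? lam k m₀ i (by omega)
            · rw [List.getElem?_append_right (by rw [lamSeg_length]; omega)]
              rw [lamSeg_length, h3 (i - (m₀ + 1)) (by omega)]
              congr 2
              omega
    obtain ⟨segs, h1, h2, h3⟩ := key N 0 (by omega) good0
    refine Or.inl ⟨segs, h1, ?_, ?_⟩
    · intro i h
      have hiN : i < N := by rw [← h2]; exact h
      have := h3 i hiN
      rw [List.getElem?_eq_getElem h] at this
      rw [List.get_eq_getElem]
      have := Option.some_inj.mp this
      rw [this]
      norm_num
    · intro i
      rw [h2]
      exact hTN i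
  · -- lam never coincides with mu : infinitely many segments
    push_neg at htail
    have key : ∀ p : {k : ℕ // GoodPos mu lam k}, ∃ m : ℕ,
        lamSeg lam p.1 m ∈ SegSet F mu ∧ GoodPos mu lam (p.1 + (m + 1)) := by
      intro p
      obtain ⟨m, ha, hb, -⟩ := step hcol p.2 (htail p.1)
      exact ⟨m, ha, hb⟩
    choose d hd1 hd2 using key
    set next : {k : ℕ // GoodPos mu lam k} → {k : ℕ // GoodPos mu lam k} :=
      fun p => ⟨p.1 + (d p + 1), hd2 p⟩ with hnext
    set st : ℕ → {k : ℕ // GoodPos mu lam k} := fun n => next^[n] ⟨0, good0⟩ with hstdef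
    have hst : ∀ n, st (n + 1) = next (st n) := fun n =>
      Function.iterate_succ_apply' next n _
    refine Or.inr ⟨fun n => lamSeg lam (st n).1 (d (st n)), fun n => hd1 (st n), ?_⟩
    set flat : ℕ → List F.E := fun n =>
      (List.ofFn fun i : Fin n => lamSeg lam (st i).1 (d (st i))).flatMap FinPath.edges
      with hflat
    have hflatsucc : ∀ n, flat (n + 1) = flat n ++ (lamSeg lam (st n).1 (d (st n))).edges := by
      intro n
      simp only [hflat]
      rw [ofFn_coe_succ (fun j => lamSeg lam (st j).1 (d (st j))) n, List.flatMap_append]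
      simp
    have main : ∀ n, (flat n).length = (st n).1 ∧ IsPrefixOfInf (flat n) lam := by
      intro n
      induction n with
      | zero =>
        constructor
        · simp [hflat, hstdef]
        · intro i h
          simp [hflat] at h
      | succ n ih =>
        rw [hflatsucc n]
        constructor
        · rw [List.length_append, ih.1, lamSeg_length, hst n]
        · intro i h
          rw [List.get_eq_getElem]
          rcases Nat.lt_or_ge i (flat n).length with hc | hc
          · rw [List.getElem_append_left hc]
            have := ih.2 i hc
            rw [List.get_eq_getElem] at this
            exact this
          · rw [List.getElem_append_right hc]
            have hlt : i - (flat n).length < (lamSeg lam (st n).1 (d (st n))).edges.length := by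
              rw [List.length_append] at h
              omega
            rw [lamSeg_getElem lam (st n).1 (d (st n)) (i - (flat n).length) hlt]
            congr 1
            rw [ih.1] at hc ⊢
            omega
    exact fun n => (main n).2
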